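/- arXiv:1505.00036 — 2 statements merged into one kernel-verified Lean document; each statement's English description precedes it below -/
import Mathlib

section
/- Let v be a linear classifier on [0,1]^n with weights w and threshold q, and suppose w_i > w_j > 0. Define B_ij = {(x, b) ∈ Piv_j \ Piv_i : (f_ij(x), b) ∈ Piv_i} and C_ij = {(x, b) ∈ Piv_j \ Piv_i : (f_ij(x), b) ∉ Piv_i}, and the maps F_ij(x, b) = (f_ij(x), b) and G_ij(x, b) = (g_ij(x, b), x_i). Then F_ij(B_ij) ∩ G_ij(C_ij) = ∅. -/
open MeasureTheory

/-- The linear classifier on ℝ^n with weights w and threshold q. -/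
noncomputable def linClass {n : ℕ} (w : Fin n → ℝ) (q : ℝ) (x : Fin n → ℝ) : ℝ :=
  if q ≤ ∑ k, w k * x k then 1 else 0

/-- The unit cube [0,1]^n. -/
def unitCube (n : ℕ) : Set (Fin n → ℝ) := Set.univ.pi fun _ => Set.Icc 0 1

/-- Piv_i(b): points of the cube that are losing but become winning when
coordinate i is set to b. -/
noncomputable def pivSet {n : ℕ} (w : Fin n → ℝ) (q : ℝ) (i : Fin n) (b : ℝ) :
    Set (Fin n → ℝ) :=
  {x | x ∈ unitCube n ∧ linClass w q x = 0 ∧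
    linClass w q (Function.update x i b) = 1}

/-- Piv_i ⊆ [0,1]^{n+1}: pairs (x, b) with x ∈ Piv_i(b). -/
noncomputable def piv {n : ℕ} (w : Fin n → ℝ) (q : ℝ) (i : Fin n) :
    Set ((Fin n → ℝ) × ℝ) :=
  {p | p.2 ∈ Set.Icc (0 : ℝ) 1 ∧ p.1 ∈ pivSet w q i p.2}

/-- The map f_ij swapping coordinates i and j. -/
def swapCoords {n : ℕ} (i j : Fin n) (x : Fin n → ℝ) : Fin n → ℝ :=
  x ∘ Equiv.swap i j

/-- g_ij(x, b): x with coordinate i set to x_j and coordinate j set to b. -/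
def gMap {n : ℕ} (i j : Fin n) (x : Fin n → ℝ) (b : ℝ) : Fin n → ℝ :=
  Function.update (Function.update x i (x j)) j b

/-- F_ij(x, b) = (f_ij(x), b). -/
def Fmap {n : ℕ} (i j : Fin n) (p : (Fin n → ℝ) × ℝ) : (Fin n → ℝ) × ℝ :=
  (swapCoords i j p.1, p.2)

/-- G_ij(x, b) = (g_ij(x, b), x_i). -/
def Gmap {n : ℕ} (i j : Fin n) (p : (Fin n → ℝ) × ℝ) : (Fin n → ℝ) × ℝ :=
  (gMap i j p.1 p.2, p.1 i)

-- helper lemmas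
lemma lin0 {n : ℕ} (w : Fin n → ℝ) (q : ℝ) (x : Fin n → ℝ) :
    linClass w q x = 0 ↔ ∑ k, w k * x k < q := by
  unfold linClass; split_ifs with h
  · constructor <;> intro h' <;> [norm_num at h'; linarith]
  · push_neg at h; simp [h]

lemma lin1 {n : ℕ} (w : Fin n → ℝ) (q : ℝ) (x : Fin n → ℝ) :
    linClass w q x = 1 ↔ q ≤ ∑ k, w k * x k := by
  unfold linClass; split_ifs with h
  · simp [h]
  · constructor <;> intro h' <;> [norm_num at h'; exact absurd h' h]

lemma sum_update_eq {n : ℕ} (w x : Fin n → ℝ) (i : Fin n) (b : ℝ) :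
    ∑ k, w k * Function.update x i b k
      = (∑ k, w k * x k) + w i * (b - x i) := by
  have h : ∀ k, w k * Function.update x i b k
      = w k * x k + (if k = i then w i * (b - x i) else 0) := by
    intro k
    rcases eq_or_ne k i with rfl | hk
    · simp; ring
    · simp [Function.update_of_ne hk, hk]
  simp [h, Finset.sum_add_distrib, Finset.sum_ite_eq']

lemma sum_swap_eq {n : ℕ} (w x : Fin n → ℝ) {i j : Fin n} (hij : i ≠ j) :
    ∑ k, w k * swapCoords i j x k
      = (∑ k, w k * x k) + w i * (x j - x i) + w j * (x i - x j) := by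
  have h : ∀ k, w k * swapCoords i j x k
      = w k * x k + (if k = i then w i * (x j - x i) else 0)
          + (if k = j then w j * (x i - x j) else 0) := by
    intro k
    rcases eq_or_ne k i with rfl | hki
    · simp [swapCoords, Equiv.swap_apply_left, hij]; ring
    · rcases eq_or_ne k j with rfl | hkj
      · simp [swapCoords, Equiv.swap_apply_right, hki]; ring
      · simp [swapCoords, Equiv.swap_apply_of_ne_of_ne hki hkj, hki, hkj]
  simp [h, Finset.sum_add_distrib, Finset.sum_ite_eq']

lemma mem_cube_iff {n : ℕ} (x : Fin n → ℝ) :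
    x ∈ unitCube n ↔ ∀ k, x k ∈ Set.Icc (0:ℝ) 1 := by
  simp [unitCube, Set.mem_pi, Pi.le_def, forall_and]

lemma swap_mem_cube {n : ℕ} {x : Fin n → ℝ} (i j : Fin n) (hx : x ∈ unitCube n) :
    swapCoords i j x ∈ unitCube n := by
  rw [mem_cube_iff] at hx ⊢
  intro k; exact hx _

/-- With B_ij = {(x,b) ∈ Piv_j \ Piv_i : (f_ij(x), b) ∈ Piv_i}
and C_ij = {(x,b) ∈ Piv_j \ Piv_i : (f_ij(x), b) ∉ Piv_i}, the images
F_ij(B_ij) and G_ij(C_ij) are disjoint. -/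
theorem Fmap_Gmap_images_disjoint
    {n : ℕ} (hn : 1 ≤ n) (w : Fin n → ℝ) (q : ℝ) (hw : ∀ k, w k ≠ 0)
    (i j : Fin n) (hij : w j < w i) (hj : 0 < w j) :
    (Fmap i j ''
        {p | p ∈ piv w q j \ piv w q i ∧ Fmap i j p ∈ piv w q i})
      ∩ (Gmap i j ''
        {p | p ∈ piv w q j \ piv w q i ∧ Fmap i j p ∉ piv w q i})
      = ∅ := by
  have hne : i ≠ j := by rintro rfl; exact lt_irrefl _ hij
  ext z
  simp only [Set.mem_inter_iff, Set.mem_image, Set.mem_setOf_eq, Set.mem_empty_iff_false,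
    iff_false, not_and]
  rintro ⟨⟨x1, b1⟩, ⟨⟨hp1j, hp1i⟩, hF1⟩, hz1⟩ ⟨⟨x2, b2⟩, ⟨⟨hp2j, hp2i⟩, hF2⟩, hz2⟩
  -- equality of the images
  have heq : Fmap i j (x1, b1) = Gmap i j (x2, b2) := hz1.trans hz2.symm
  have heq1 : swapCoords i j x1 = gMap i j x2 b2 := congrArg Prod.fst heq
  have hb1 : b1 = x2 i := congrArg Prod.snd heq
  -- x1 = update x2 i b2
  have hx1 : x1 = Function.update x2 i b2 := by
    funext k
    have h := congrFun heq1 (Equiv.swap i j k)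
    simp only [swapCoords, Function.comp_apply, Equiv.swap_apply_self] at h
    rw [h]
    rcases eq_or_ne k i with rfl | hki
    · rw [gMap, Equiv.swap_apply_left, Function.update_self, Function.update_self]
    · rcases eq_or_ne k j with rfl | hkj
      · rw [gMap, Equiv.swap_apply_right, Function.update_of_ne hne,
          Function.update_self, Function.update_of_ne hne.symm]
      · rw [gMap, Equiv.swap_apply_of_ne_of_ne hki hkj, Function.update_of_ne hkj,
          Function.update_of_ne hki, Function.update_of_ne hki]
  have hx1i : x1 i = b2 := by rw [hx1]; simp
  have hx1j : x1 j = x2 j := by rw [hx1]; simp [Function.update_of_ne hne.symm]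
  -- unpack memberships
  obtain ⟨hb2Icc, hcube2, hlin2, hupd2⟩ : b2 ∈ Set.Icc (0:ℝ) 1 ∧ x2 ∈ unitCube n ∧
      linClass w q x2 = 0 ∧ linClass w q (Function.update x2 j b2) = 1 := by
    obtain ⟨h1, h2, h3, h4⟩ := hp2j; exact ⟨h1, h2, h3, h4⟩
  obtain ⟨hb1Icc, hcube1, hlin1', hupd1⟩ : b1 ∈ Set.Icc (0:ℝ) 1 ∧ x1 ∈ unitCube n ∧
      linClass w q x1 = 0 ∧ linClass w q (Function.update x1 j b1) = 1 := by
    obtain ⟨h1, h2, h3, h4⟩ := hp1j; exact ⟨h1, h2, h3, h4⟩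
  obtain ⟨_, _, hlinF1, _⟩ : b1 ∈ Set.Icc (0:ℝ) 1 ∧ swapCoords i j x1 ∈ unitCube n ∧
      linClass w q (swapCoords i j x1) = 0 ∧
      linClass w q (Function.update (swapCoords i j x1) i b1) = 1 := by
    obtain ⟨h1, h2, h3, h4⟩ := hF1; exact ⟨h1, h2, h3, h4⟩
  set S2 := ∑ k, w k * x2 k with hS2
  -- A1
  have A1 : S2 < q := (lin0 w q x2).mp hlin2
  -- A2
  have A2 : q ≤ S2 + w j * (b2 - x2 j) := by
    have := (lin1 w q _).mp hupd2; rwa [sum_update_eq] at this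
  -- S1 relation
  have hS1 : ∑ k, w k * x1 k = S2 + w i * (b2 - x2 i) := by
    rw [hx1, sum_update_eq]
  -- A3 : p2 ∉ piv i
  have A3 : S2 + w i * (b2 - x2 i) < q := by
    by_contra h
    push_neg at h
    exact hp2i ⟨hb2Icc, hcube2, hlin2, (lin1 w q _).mpr (by rwa [sum_update_eq])⟩
  -- B2 : from p1 ∈ piv j
  have B2 : q ≤ S2 + w i * (b2 - x2 i) + w j * (x2 i - x2 j) := by
    have := (lin1 w q _).mp hupd1
    rw [sum_update_eq, hS1, hx1j, hb1] at this
    exact this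
  -- C1 : from F p1 ∈ piv i
  have C1 : S2 + w i * (x2 j - x2 i) + w j * (b2 - x2 j) < q := by
    have := (lin0 w q _).mp hlinF1
    rw [sum_swap_eq w x1 hne, hS1, hx1i, hx1j] at this
    nlinarith [this]
  -- A4 : from F p2 ∉ piv i
  have A4 : q ≤ S2 + w i * (x2 j - x2 i) + w j * (x2 i - x2 j) ∨
      S2 + w i * (x2 j - x2 i) + w j * (x2 i - x2 j) + w i * (b2 - x2 j) < q := by
    by_contra h
    push_neg at h
    obtain ⟨h4a, h4b⟩ := h
    refine hF2 ⟨hb2Icc, swap_mem_cube i j hcube2, (lin0 w q _).mpr ?_, (lin1 w q _).mpr ?_⟩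
    · simp only [Fmap]
      rw [sum_swap_eq w x2 hne]; exact h4a
    · simp only [Fmap]
      rw [sum_update_eq, sum_swap_eq w x2 hne]
      have hswi : swapCoords i j x2 i = x2 j := by simp [swapCoords]
      rw [hswi]; linarith
  rcases A4 with h4 | h4
  · -- case 1: contradiction via x2 j > x2 i and x2 i > x2 j
    have hd1 : 0 < (w i - w j) * (x2 j - x2 i) := by nlinarith
    have hd2 : 0 < w j * (x2 i - x2 j) := by linarith
    nlinarith [hd1, hd2, sub_pos.mpr hij, hj]
  · -- case 2: direct contradiction with B2
    linarith
end

section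
/- Let v be a linear classifier on [0,1]^n with weights w and threshold q. If w_i ≥ w_j > 0 then χ_i ≥ χ_j. -/
open MeasureTheory

/-- The influence χ_i = ∫_0^1 ∫_{[0,1]^n} |v(x_{-i}, b) − v(x)| dx db. -/
noncomputable def chiLin {n : ℕ} (w : Fin n → ℝ) (q : ℝ) (i : Fin n) : ℝ :=
  ∫ b in Set.Icc (0 : ℝ) 1,
    ∫ x in unitCube n, |linClass w q (Function.update x i b) - linClass w q x|

/-! ### Auxiliary development -/

noncomputable def cl (u : ℝ) : ℝ := max 0 (min 1 u)

lemma cl_nonneg (u : ℝ) : 0 ≤ cl u := le_max_left _ _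

lemma cl_le_one (u : ℝ) : cl u ≤ 1 := max_le zero_le_one (min_le_left _ _)

lemma cl_of_nonpos {u : ℝ} (h : u ≤ 0) : cl u = 0 := by
  unfold cl; rw [min_eq_right (h.trans zero_le_one), max_eq_left h]

lemma cl_of_mem {u : ℝ} (h0 : 0 ≤ u) (h1 : u ≤ 1) : cl u = u := by
  unfold cl; rw [min_eq_right h1, max_eq_right h0]

lemma cl_of_ge {u : ℝ} (h : 1 ≤ u) : cl u = 1 := by
  unfold cl; rw [min_eq_left h, max_eq_right zero_le_one]

lemma cl_continuous : Continuous cl := continuous_const.max (continuous_const.min continuous_id)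

noncomputable def Hfun (u : ℝ) : ℝ := (cl u)^2/2 - (cl u)^3/3

lemma Hfun_continuous : Continuous Hfun :=
  ((cl_continuous.pow 2).div_const 2).sub ((cl_continuous.pow 3).div_const 3)

lemma Hfun_of_nonpos {u : ℝ} (h : u ≤ 0) : Hfun u = 0 := by simp [Hfun, cl_of_nonpos h]

lemma Hfun_of_mem {u : ℝ} (h0 : 0 ≤ u) (h1 : u ≤ 1) : Hfun u = u^2/2 - u^3/3 := by
  simp [Hfun, cl_of_mem h0 h1]

lemma Hfun_of_ge {u : ℝ} (h : 1 ≤ u) : Hfun u = 1/6 := by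
  simp [Hfun, cl_of_ge h]; norm_num

lemma hpoly (v : ℝ) : HasDerivAt (fun u : ℝ => u^2/2 - u^3/3) (v * (1 - v)) v := by
  have h := (((hasDerivAt_pow 2 v).div_const 2).sub ((hasDerivAt_pow 3 v).div_const 3))
  exact h.congr_deriv (by push_cast; ring)

lemma hasDerivAt_Hfun (u : ℝ) : HasDerivAt Hfun (cl u * (1 - cl u)) u := by
  have hleft : ∀ v : ℝ, v ≤ 0 → HasDerivWithinAt Hfun 0 (Set.Iic 0) v := fun v hv =>
    (hasDerivWithinAt_const v _ (0:ℝ)).congr (fun w hw => Hfun_of_nonpos hw) (Hfun_of_nonpos hv)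
  have hmid : ∀ v : ℝ, 0 ≤ v → v ≤ 1 → HasDerivWithinAt Hfun (v * (1 - v)) (Set.Icc 0 1) v :=
    fun v h0 h1 => ((hpoly v).hasDerivWithinAt).congr
      (fun w hw => Hfun_of_mem hw.1 hw.2) (Hfun_of_mem h0 h1)
  have hright : ∀ v : ℝ, 1 ≤ v → HasDerivWithinAt Hfun 0 (Set.Ici 1) v := fun v hv =>
    (hasDerivWithinAt_const v _ (1/6:ℝ)).congr (fun w hw => Hfun_of_ge hw) (Hfun_of_ge hv)
  have hIcc : Set.Icc (0:ℝ) 1 = Set.Ici 0 ∩ Set.Iic 1 := by ext v; simp [and_comm]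
  rcases lt_trichotomy u 0 with h | h | h
  · rw [cl_of_nonpos h.le]
    have hev : Hfun =ᶠ[nhds u] (fun _ => 0) := by
      filter_upwards [eventually_lt_nhds h] with v hv using Hfun_of_nonpos hv.le
    simpa using (hasDerivAt_const u (0:ℝ)).congr_of_eventuallyEq hev
  · subst h
    rw [cl_of_mem le_rfl zero_le_one]; norm_num
    rw [← hasDerivWithinAt_univ, ← Set.Iic_union_Ici (a := (0:ℝ))]
    refine (hleft 0 le_rfl).union ?_
    have h0 : HasDerivWithinAt Hfun 0 (Set.Icc 0 1) 0 := by
      simpa using hmid 0 le_rfl zero_le_one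
    exact h0.mono_of_mem_nhdsWithin (by
      rw [hIcc]
      exact Filter.inter_mem self_mem_nhdsWithin
        (nhdsWithin_le_nhds (Iic_mem_nhds zero_lt_one)))
  rcases lt_trichotomy u 1 with h1 | h1 | h1
  · rw [cl_of_mem h.le h1.le]
    have hev : Hfun =ᶠ[nhds u] (fun v => v^2/2 - v^3/3) := by
      filter_upwards [eventually_gt_nhds h, eventually_lt_nhds h1] with v hv hv1 using
        Hfun_of_mem hv.le hv1.le
    exact (hpoly u).congr_of_eventuallyEq hev
  · subst h1
    rw [cl_of_ge le_rfl]; norm_num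
    rw [← hasDerivWithinAt_univ, ← Set.Iic_union_Ici (a := (1:ℝ))]
    refine HasDerivWithinAt.union ?_ (hright 1 le_rfl)
    have h0 : HasDerivWithinAt Hfun 0 (Set.Icc 0 1) 1 := by
      simpa using hmid 1 zero_le_one le_rfl
    exact h0.mono_of_mem_nhdsWithin (by
      rw [hIcc]
      exact Filter.inter_mem (nhdsWithin_le_nhds (Ici_mem_nhds zero_lt_one))
        self_mem_nhdsWithin)
  · rw [cl_of_ge h1.le]
    have hev : Hfun =ᶠ[nhds u] (fun _ => 1/6) := by
      filter_upwards [eventually_gt_nhds h1] with v hv using Hfun_of_ge hv.le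
    simpa using (hasDerivAt_const u (1/6:ℝ)).congr_of_eventuallyEq hev

lemma Hfun_reflect (u : ℝ) : Hfun (1 - u) = 1/6 - Hfun u := by
  rcases le_total u 0 with h | h
  · rw [Hfun_of_nonpos h, Hfun_of_ge (by linarith)]; ring
  rcases le_total u 1 with h1 | h1
  · rw [Hfun_of_mem h h1, Hfun_of_mem (by linarith) (by linarith)]; ring
  · rw [Hfun_of_ge h1, Hfun_of_nonpos (by linarith)]; ring

noncomputable def Theta (c d m : ℝ) : ℝ :=
  ∫ t in Set.Icc (0:ℝ) 1, 2 * (cl ((m - d*t)/c) * (1 - cl ((m - d*t)/c)))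

lemma theta_eq {c d : ℝ} (hc : 0 < c) (hd : 0 < d) (m : ℝ) :
    Theta c d m = 2*(c/d) * (Hfun (m/c) - Hfun ((m-d)/c)) := by
  have key := intervalIntegral.integral_eq_sub_of_hasDerivAt (a := (0:ℝ)) (b := 1)
    (f := fun t => -(2*c/d) * Hfun ((m - d*t)/c))
    (f' := fun t => 2 * (cl ((m - d*t)/c) * (1 - cl ((m - d*t)/c))))
    (fun t _ => by
      have hin : HasDerivAt (fun t : ℝ => (m - d*t)/c) (-d/c) t := by
        have h2 : HasDerivAt (fun t : ℝ => m - d*t) (-d) t := by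
          simpa using ((hasDerivAt_id t).const_mul d).const_sub m
        simpa using h2.div_const c
      have h3 := ((hasDerivAt_Hfun ((m - d*t)/c)).comp t hin).const_mul (-(2*c/d))
      refine h3.congr_deriv ?_
      field_simp)
    (by
      have h1 : Continuous fun t : ℝ => cl ((m - d*t)/c) :=
        cl_continuous.comp (by continuity)
      exact (continuous_const.mul (h1.mul (continuous_const.sub h1))).intervalIntegrable 0 1)
  unfold Theta
  rw [integral_Icc_eq_integral_Ioc, ← intervalIntegral.integral_of_le zero_le_one, key]
  field_simp
  ring

lemma theta_continuous {c d : ℝ} (hc : 0 < c) (hd : 0 < d) :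
    Continuous fun m => Theta c d m := by
  have h : (fun m => Theta c d m)
      = fun m => 2*(c/d) * (Hfun (m/c) - Hfun ((m-d)/c)) := funext (theta_eq hc hd)
  rw [h]
  exact continuous_const.mul ((Hfun_continuous.comp (continuous_id.div_const c)).sub
    (Hfun_continuous.comp ((continuous_id.sub continuous_const).div_const c)))

lemma regII {c d s : ℝ} (hd : 0 < d) (hdc : d ≤ c) (hs0 : 0 ≤ s) (hsd : s ≤ d) :
    2*(d/c)*Hfun (s/d) ≤ 2*(c/d)*Hfun (s/c) := by
  have hc : 0 < c := hd.trans_le hdc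
  rw [Hfun_of_mem (by positivity) (by rw [div_le_one hd]; exact hsd),
      Hfun_of_mem (by positivity) (by rw [div_le_one hc]; exact hsd.trans hdc)]
  have key : 2*(c/d)*((s/c)^2/2 - (s/c)^3/3) - 2*(d/c)*((s/d)^2/2-(s/d)^3/3)
      = (2/3)*(s^3*(c-d))/(c^2*d^2) := by
    field_simp
    ring
  have h4 : 0 ≤ 2/3*(s^3*(c-d))/(c^2*d^2) :=
    div_nonneg (by nlinarith [mul_nonneg (pow_nonneg hs0 3) (sub_nonneg.2 hdc)]) (by positivity)
  linarith [key, h4]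

lemma regIII {c d m : ℝ} (hd : 0 < d) (hdc : d ≤ c) (hdm : d ≤ m) (hmc : m ≤ c) :
    2*(d/c)*(1/6 - 0) ≤ 2*(c/d)*(Hfun (m/c) - Hfun ((m-d)/c)) := by
  have hc : 0 < c := hd.trans_le hdc
  rw [Hfun_of_mem (div_nonneg (by linarith) hc.le) (by rw [div_le_one hc]; exact hmc),
      Hfun_of_mem (div_nonneg (by linarith) hc.le) (by rw [div_le_one hc]; linarith)]
  have key : 2*(c/d)*((m/c)^2/2 - (m/c)^3/3 - ((m-d)/c)^2/2 - ((m-d)/c)^3/3*(-1)) - 2*(d/c)*(1/6 - 0)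
      = (6*(m-d)*(c-m) + 2*d*(c-d))/(3*c^2) := by
    field_simp
    ring
  have hnum : 0 ≤ 6*(m-d)*(c-m) + 2*d*(c-d) := by
    nlinarith [mul_nonneg (sub_nonneg.2 hdm) (sub_nonneg.2 hmc), mul_nonneg hd.le (sub_nonneg.2 hdc)]
  have h4 : 0 ≤ (6*(m-d)*(c-m) + 2*d*(c-d))/(3*c^2) := div_nonneg hnum (by positivity)
  nlinarith [key, h4]

lemma theta_core {c d : ℝ} (hd : 0 < d) (hdc : d ≤ c) (m : ℝ) :
    Theta d c m ≤ Theta c d m := by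
  have hc : 0 < c := hd.trans_le hdc
  rw [theta_eq hc hd m, theta_eq hd hc m]
  rcases le_total m 0 with h0 | h0
  · rw [Hfun_of_nonpos (u := m/c) (div_nonpos_iff.mpr (Or.inr ⟨h0, hc.le⟩)),
        Hfun_of_nonpos (u := (m-d)/c) (div_nonpos_iff.mpr (Or.inr ⟨by linarith, hc.le⟩)),
        Hfun_of_nonpos (u := m/d) (div_nonpos_iff.mpr (Or.inr ⟨h0, hd.le⟩)),
        Hfun_of_nonpos (u := (m-c)/d) (div_nonpos_iff.mpr (Or.inr ⟨by linarith, hd.le⟩))]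
    simp
  · rcases le_total m d with h1 | h1
    · rw [Hfun_of_nonpos (u := (m-d)/c) (div_nonpos_iff.mpr (Or.inr ⟨by linarith, hc.le⟩)),
          Hfun_of_nonpos (u := (m-c)/d) (div_nonpos_iff.mpr (Or.inr ⟨by linarith, hd.le⟩))]
      simpa using regII hd hdc h0 h1
    · rcases le_total m c with h2 | h2
      · rw [Hfun_of_ge (u := m/d) ((one_le_div hd).2 h1),
            Hfun_of_nonpos (u := (m-c)/d) (div_nonpos_iff.mpr (Or.inr ⟨by linarith, hd.le⟩))]
        exact regIII hd hdc h1 h2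
      · rcases le_total m (c+d) with h3 | h3
        · have e1 : Hfun (m/c) = 1/6 := Hfun_of_ge ((one_le_div hc).2 h2)
          have e2 : Hfun (m/d) = 1/6 := Hfun_of_ge ((one_le_div hd).2 (by linarith))
          have e3 : Hfun ((m-d)/c) = 1/6 - Hfun ((c+d-m)/c) := by
            rw [← Hfun_reflect]
            congr 1
            field_simp
            ring
          have e4 : Hfun ((m-c)/d) = 1/6 - Hfun ((c+d-m)/d) := by
            rw [← Hfun_reflect]
            congr 1
            field_simp
            ring
          rw [e1, e2, e3, e4]
          have := regII hd hdc (s := c+d-m) (by linarith) (by linarith)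
          linarith
        · rw [Hfun_of_ge (u := m/c) ((one_le_div hc).2 h2),
              Hfun_of_ge (u := m/d) ((one_le_div hd).2 (by linarith)),
              Hfun_of_ge (u := (m-d)/c) ((one_le_div hc).2 (by linarith)),
              Hfun_of_ge (u := (m-c)/d) ((one_le_div hd).2 (by linarith))]
          simp

/-! ### Measure-theoretic lemmas -/

instance fin01 : IsFiniteMeasure (volume.restrict (Set.Icc (0:ℝ) 1)) := by
  constructor
  rw [Measure.restrict_apply_univ, Real.volume_Icc]
  exact ENNReal.ofReal_lt_top

lemma unitCube_measurable (n : ℕ) : MeasurableSet (unitCube n) :=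
  MeasurableSet.univ_pi fun _ => measurableSet_Icc

lemma volume_unitCube (n : ℕ) : volume (unitCube n) = 1 := by
  rw [unitCube, volume_pi_pi]
  simp [Real.volume_Icc]

instance cubeFin (n : ℕ) : IsFiniteMeasure (volume.restrict (unitCube n)) := by
  constructor
  rw [Measure.restrict_apply_univ, volume_unitCube]
  exact ENNReal.one_lt_top

lemma vol_Icc_inter_Ici (τ : ℝ) : (volume (Set.Icc (0:ℝ) 1 ∩ Set.Ici τ)).toReal = 1 - cl τ := by
  have h : Set.Icc (0:ℝ) 1 ∩ Set.Ici τ = Set.Icc (max 0 τ) 1 := by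
    ext v
    simp [Set.mem_Icc, Set.mem_Ici, max_le_iff]
    tauto
  rw [h, Real.volume_Icc, ENNReal.toReal_ofReal']
  unfold cl
  rcases le_total τ 0 with h1 | h1
  · rw [max_eq_left h1, min_eq_right (h1.trans zero_le_one), max_eq_left h1]; simp
  rcases le_total τ 1 with h2 | h2
  · rw [max_eq_right h1, min_eq_right h2, max_eq_right h1, max_eq_left (by linarith)]
  · rw [max_eq_right h1, min_eq_left h2, max_eq_right (by linarith : 1 - τ ≤ 0),
      max_eq_right zero_le_one]
    linarith

lemma integral_step (τ p r : ℝ) :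
    ∫ t in Set.Icc (0:ℝ) 1, (if τ ≤ t then p else r) = p * (1 - cl τ) + r * cl τ := by
  have hfun : (fun t : ℝ => if τ ≤ t then p else r)
      = fun t => r + (Set.Ici τ).indicator (fun _ => p - r) t := by
    funext t
    by_cases h : τ ≤ t <;> simp [Set.indicator_apply, Set.mem_Ici, h]
  rw [hfun]
  rw [integral_add (integrable_const r)
    ((integrable_const (p - r) :
      Integrable _ (volume.restrict (Set.Icc (0:ℝ) 1))).indicator measurableSet_Ici)]
  rw [setIntegral_const, setIntegral_indicator measurableSet_Ici, setIntegral_const]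
  rw [measureReal_def, measureReal_def, Real.volume_Icc, vol_Icc_inter_Ici]
  have h1 : ((ENNReal.ofReal (1 - 0)).toReal) = 1 := by norm_num
  rw [h1, smul_eq_mul, smul_eq_mul]
  ring

lemma cube_split {n : ℕ} (i : Fin (n+1)) (f : (Fin (n+1) → ℝ) → ℝ)
    (hf : Measurable f) (C : ℝ) (hC : ∀ x, |f x| ≤ C) :
    ∫ x in unitCube (n+1), f x
      = ∫ x in unitCube (n+1), ∫ t in Set.Icc (0:ℝ) 1, f (Function.update x i t) := by
  set e := MeasurableEquiv.piFinSuccAbove (fun _ : Fin (n+1) => ℝ) i with he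
  have hmp : MeasurePreserving e volume volume := volume_preserving_piFinSuccAbove _ i
  have hpre : unitCube (n+1) = e ⁻¹' ((Set.Icc (0:ℝ) 1) ×ˢ unitCube n) := by
    ext x
    simp only [Set.mem_preimage, he, MeasurableEquiv.piFinSuccAbove_apply, Set.mem_prod,
      unitCube, Set.mem_pi, Set.mem_univ, forall_true_left]
    rw [Fin.forall_iff_succAbove i]
    tauto
  have hpre' : e.symm ⁻¹' (unitCube (n+1)) = (Set.Icc (0:ℝ) 1) ×ˢ unitCube n := by
    rw [hpre]
    ext p
    simp
  have hsymm : MeasurePreserving e.symm volume volume := hmp.symm e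
  have hmeas2 : Measurable fun p : ℝ × (Fin n → ℝ) => f (e.symm p) := hf.comp e.symm.measurable
  have hint : Integrable (fun p : ℝ × (Fin n → ℝ) => f (e.symm p))
      ((volume.restrict (Set.Icc (0:ℝ) 1)).prod (volume.restrict (unitCube n))) := by
    apply Integrable.mono' (integrable_const C) hmeas2.aestronglyMeasurable
    filter_upwards with p
    rw [Real.norm_eq_abs]
    exact hC _
  have h1 : ∫ x in unitCube (n+1), f x
      = ∫ p in (Set.Icc (0:ℝ) 1) ×ˢ unitCube n, f (e.symm p) := by
    rw [← hpre']
    exact (hsymm.setIntegral_preimage_emb e.symm.measurableEmbedding f _).symm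
  have h2 : ∫ p in (Set.Icc (0:ℝ) 1) ×ˢ unitCube n, f (e.symm p)
      = ∫ y in unitCube n, ∫ t in Set.Icc (0:ℝ) 1, f (e.symm (t, y)) := by
    rw [Measure.volume_eq_prod, ← Measure.prod_restrict]
    rw [MeasureTheory.integral_prod _ hint]
    exact integral_integral_swap hint
  have hupdate : ∀ (x : Fin (n+1) → ℝ) (t : ℝ), Function.update x i t = e.symm (t, (e x).2) := by
    intro x t
    rw [MeasurableEquiv.piFinSuccAbove_symm_apply]
    exact (Fin.insertNth_removeNth i t x).symm
  have hGsm : StronglyMeasurable fun y : Fin n → ℝ =>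
      ∫ t in Set.Icc (0:ℝ) 1, f (e.symm (t, y)) :=
    (hmeas2.stronglyMeasurable).integral_prod_left'
  have hGbd : ∀ y : Fin n → ℝ, ‖∫ t in Set.Icc (0:ℝ) 1, f (e.symm (t, y))‖ ≤ C := by
    intro y
    calc ‖∫ t in Set.Icc (0:ℝ) 1, f (e.symm (t, y))‖
        ≤ C * (volume (Set.Icc (0:ℝ) 1)).toReal := by
          apply norm_setIntegral_le_of_norm_le_const_ae (by simp [Real.volume_Icc])
          filter_upwards with t
          rw [Real.norm_eq_abs]
          exact hC _
      _ = C := by simp [Real.volume_Icc]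
  have hint2 : Integrable (fun p : ℝ × (Fin n → ℝ) =>
        ∫ t in Set.Icc (0:ℝ) 1, f (e.symm (t, p.2)))
      ((volume.restrict (Set.Icc (0:ℝ) 1)).prod (volume.restrict (unitCube n))) := by
    apply Integrable.mono' (integrable_const C)
      ((hGsm.comp_measurable measurable_snd).aestronglyMeasurable)
    filter_upwards with p
    exact hGbd _
  have h3 : ∫ x in unitCube (n+1), ∫ t in Set.Icc (0:ℝ) 1, f (Function.update x i t)
      = ∫ p in (Set.Icc (0:ℝ) 1) ×ˢ unitCube n, ∫ t in Set.Icc (0:ℝ) 1, f (e.symm (t, p.2)) := by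
    simp_rw [hupdate]
    rw [hpre]
    exact hmp.setIntegral_preimage_emb e.measurableEmbedding
      (fun p => ∫ t in Set.Icc (0:ℝ) 1, f (e.symm (t, p.2))) _
  have h4 : ∫ p in (Set.Icc (0:ℝ) 1) ×ˢ unitCube n, ∫ t in Set.Icc (0:ℝ) 1, f (e.symm (t, p.2))
      = ∫ y in unitCube n, ∫ t in Set.Icc (0:ℝ) 1, f (e.symm (t, y)) := by
    rw [Measure.volume_eq_prod, ← Measure.prod_restrict]
    rw [MeasureTheory.integral_prod _ hint2]
    rw [MeasureTheory.integral_integral_swap hint2]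
    simp [MeasureTheory.integral_const, Measure.restrict_apply_univ, Real.volume_Icc]
  rw [h1, h2, h3, h4]

/-! ### Sums and the classifier -/

noncomputable def Sless {n : ℕ} (w : Fin n → ℝ) (i : Fin n) (x : Fin n → ℝ) : ℝ :=
  ∑ k ∈ Finset.univ.erase i, w k * x k

lemma sum_update {n : ℕ} (w : Fin n → ℝ) (i : Fin n) (x : Fin n → ℝ) (t : ℝ) :
    ∑ k, w k * (Function.update x i t) k = w i * t + Sless w i x := by
  rw [← Finset.add_sum_erase _ _ (Finset.mem_univ i), Function.update_self]
  unfold Sless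
  congr 1
  exact Finset.sum_congr rfl fun k hk => by
    rw [Function.update_of_ne (Finset.ne_of_mem_erase hk)]

lemma Sless_update_self {n : ℕ} (w : Fin n → ℝ) (i : Fin n) (x : Fin n → ℝ) (t : ℝ) :
    Sless w i (Function.update x i t) = Sless w i x :=
  Finset.sum_congr rfl fun k hk => by
    rw [Function.update_of_ne (Finset.ne_of_mem_erase hk)]

lemma Sless_update {n : ℕ} (w : Fin n → ℝ) (i j : Fin n) (hne : j ≠ i)
    (x : Fin n → ℝ) (t : ℝ) :
    Sless w i (Function.update x j t)
      = w j * t + ∑ k ∈ (Finset.univ.erase i).erase j, w k * x k := by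
  unfold Sless
  rw [← Finset.add_sum_erase _ _ (Finset.mem_erase.2 ⟨hne, Finset.mem_univ j⟩),
    Function.update_self]
  congr 1
  exact Finset.sum_congr rfl fun k hk => by
    rw [Function.update_of_ne (Finset.ne_of_mem_erase hk)]

lemma linClass_measurable {n : ℕ} (w : Fin n → ℝ) (q : ℝ) : Measurable (linClass w q) := by
  unfold linClass
  have hsum : Measurable fun x : Fin n → ℝ => ∑ k, w k * x k :=
    (continuous_finset_sum _ fun k _ => continuous_const.mul (continuous_apply k)).measurable
  exact Measurable.ite (measurableSet_le measurable_const hsum) measurable_const measurable_const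

lemma linClass_cases {n : ℕ} (w : Fin n → ℝ) (q : ℝ) (x : Fin n → ℝ) :
    linClass w q x = 0 ∨ linClass w q x = 1 := by
  unfold linClass; split_ifs <;> simp

lemma linClass_update_eq {n : ℕ} (w : Fin n → ℝ) (q : ℝ) (i : Fin n) (hi : 0 < w i)
    (x : Fin n → ℝ) (t : ℝ) :
    linClass w q (Function.update x i t)
      = if (q - Sless w i x)/(w i) ≤ t then 1 else 0 := by
  unfold linClass
  rw [sum_update]
  congr 1
  simp only [eq_iff_iff]
  rw [div_le_iff₀ hi]
  constructor <;> intro <;> nlinarith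

lemma inner_b {n : ℕ} (w : Fin n → ℝ) (q : ℝ) (i : Fin n) (hi : 0 < w i) (x : Fin n → ℝ) :
    ∫ b in Set.Icc (0:ℝ) 1, |linClass w q (Function.update x i b) - linClass w q x|
      = (1 - linClass w q x) * (1 - cl ((q - Sless w i x)/(w i)))
        + linClass w q x * cl ((q - Sless w i x)/(w i)) := by
  have hrw : (fun b => |linClass w q (Function.update x i b) - linClass w q x|)
      = fun b => if (q - Sless w i x)/(w i) ≤ b
          then |1 - linClass w q x| else |0 - linClass w q x| := by
    funext b
    rw [linClass_update_eq w q i hi]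
    split_ifs <;> rfl
  rw [hrw, integral_step]
  rcases linClass_cases w q x with h | h <;> rw [h] <;> norm_num

lemma Sless_measurable {n : ℕ} (w : Fin n → ℝ) (i : Fin n) : Measurable (Sless w i) :=
  (continuous_finset_sum _ fun k _ => continuous_const.mul (continuous_apply k)).measurable

lemma linClass_mem {n : ℕ} (w : Fin n → ℝ) (q : ℝ) (x : Fin n → ℝ) :
    0 ≤ linClass w q x ∧ linClass w q x ≤ 1 := by
  rcases linClass_cases w q x with h | h <;> rw [h] <;> norm_num

lemma chi_formula {n : ℕ} (w : Fin (n+1) → ℝ) (q : ℝ) (i j : Fin (n+1)) (hne : j ≠ i)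
    (hi : 0 < w i) :
    chiLin w q i = ∫ x in unitCube (n+1),
      Theta (w i) (w j) (q - ∑ k ∈ (Finset.univ.erase i).erase j, w k * x k) := by
  have hτmeas : Measurable fun x : Fin (n+1) → ℝ => (q - Sless w i x)/(w i) :=
    (measurable_const.sub (Sless_measurable w i)).div_const _
  have hclmeas : Measurable fun x : Fin (n+1) → ℝ => cl ((q - Sless w i x)/(w i)) :=
    cl_continuous.measurable.comp hτmeas
  -- Step 1: Fubini swap
  have hupd : Measurable fun p : ℝ × (Fin (n+1) → ℝ) => Function.update p.2 i p.1 := by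
    apply measurable_pi_lambda
    intro k
    simp only [Function.update_apply]
    split_ifs with h
    · exact measurable_fst
    · exact (measurable_pi_apply k).comp measurable_snd
  have hPmeas : Measurable fun p : ℝ × (Fin (n+1) → ℝ) =>
      |linClass w q (Function.update p.2 i p.1) - linClass w q p.2| :=
    (((linClass_measurable w q).comp hupd).sub
      ((linClass_measurable w q).comp measurable_snd)).abs
  have hPint : Integrable (fun p : ℝ × (Fin (n+1) → ℝ) =>
        |linClass w q (Function.update p.2 i p.1) - linClass w q p.2|)
      ((volume.restrict (Set.Icc (0:ℝ) 1)).prod (volume.restrict (unitCube (n+1)))) := by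
    apply Integrable.mono' (integrable_const 1) hPmeas.aestronglyMeasurable
    filter_upwards with p
    rw [Real.norm_eq_abs, abs_abs]
    have h1 := linClass_mem w q (Function.update p.2 i p.1)
    have h2 := linClass_mem w q p.2
    rw [abs_le]
    constructor <;> linarith [h1.1, h1.2, h2.1, h2.2]
  have step1 : chiLin w q i = ∫ x in unitCube (n+1), ∫ b in Set.Icc (0:ℝ) 1,
      |linClass w q (Function.update x i b) - linClass w q x| :=
    integral_integral_swap hPint
  -- Step 2: compute the inner integral over b
  have step2 : chiLin w q i = ∫ x in unitCube (n+1),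
      ((1 - linClass w q x) * (1 - cl ((q - Sless w i x)/(w i)))
        + linClass w q x * cl ((q - Sless w i x)/(w i))) := by
    rw [step1]
    exact setIntegral_congr_fun (unitCube_measurable _) fun x _ => inner_b w q i hi x
  -- Step 3: integrate out coordinate i
  have hf2meas : Measurable fun x : Fin (n+1) → ℝ =>
      ((1 - linClass w q x) * (1 - cl ((q - Sless w i x)/(w i)))
        + linClass w q x * cl ((q - Sless w i x)/(w i))) :=
    (((measurable_const.sub (linClass_measurable w q)).mul
      (measurable_const.sub hclmeas)).add ((linClass_measurable w q).mul hclmeas))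
  have hf2bd : ∀ x : Fin (n+1) → ℝ,
      |(1 - linClass w q x) * (1 - cl ((q - Sless w i x)/(w i)))
        + linClass w q x * cl ((q - Sless w i x)/(w i))| ≤ 1 := by
    intro x
    have h1 := linClass_mem w q x
    have h2 := cl_nonneg ((q - Sless w i x)/(w i))
    have h3 := cl_le_one ((q - Sless w i x)/(w i))
    rw [abs_le]
    constructor <;> nlinarith [h1.1, h1.2]
  have step3 : chiLin w q i = ∫ x in unitCube (n+1),
      2 * (cl ((q - Sless w i x)/(w i)) * (1 - cl ((q - Sless w i x)/(w i)))) := by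
    rw [step2, cube_split i _ hf2meas 1 hf2bd]
    refine setIntegral_congr_fun (unitCube_measurable _) fun x _ => ?_
    have hS : ∀ t : ℝ, Sless w i (Function.update x i t) = Sless w i x :=
      Sless_update_self w i x
    have hfun : (fun t : ℝ => ((1 - linClass w q (Function.update x i t))
          * (1 - cl ((q - Sless w i (Function.update x i t))/(w i)))
        + linClass w q (Function.update x i t)
          * cl ((q - Sless w i (Function.update x i t))/(w i))))
        = fun t => if (q - Sless w i x)/(w i) ≤ t
            then cl ((q - Sless w i x)/(w i)) else 1 - cl ((q - Sless w i x)/(w i)) := by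
      funext t
      rw [hS t, linClass_update_eq w q i hi]
      split_ifs <;> ring
    show (∫ t in Set.Icc (0:ℝ) 1, _) = _
    rw [hfun, integral_step]
    ring
  -- Step 4: integrate out coordinate j
  have hf3meas : Measurable fun x : Fin (n+1) → ℝ =>
      2 * (cl ((q - Sless w i x)/(w i)) * (1 - cl ((q - Sless w i x)/(w i)))) :=
    measurable_const.mul (hclmeas.mul (measurable_const.sub hclmeas))
  have hf3bd : ∀ x : Fin (n+1) → ℝ,
      |2 * (cl ((q - Sless w i x)/(w i)) * (1 - cl ((q - Sless w i x)/(w i))))| ≤ 2 := by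
    intro x
    have h2 := cl_nonneg ((q - Sless w i x)/(w i))
    have h3 := cl_le_one ((q - Sless w i x)/(w i))
    rw [abs_le]
    constructor <;> nlinarith
  rw [step3, cube_split j _ hf3meas 2 hf3bd]
  refine setIntegral_congr_fun (unitCube_measurable _) fun x _ => ?_
  have harg : ∀ t : ℝ, (q - Sless w i (Function.update x j t))/(w i)
      = ((q - ∑ k ∈ (Finset.univ.erase i).erase j, w k * x k) - w j * t)/(w i) := by
    intro t
    rw [Sless_update w i j hne x t]
    ring_nf
  show (∫ t in Set.Icc (0:ℝ) 1, _) = Theta _ _ _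
  unfold Theta
  refine setIntegral_congr_fun measurableSet_Icc fun t _ => ?_
  rw [harg t]

lemma erase_comm' {n : ℕ} (i j : Fin n) :
    (Finset.univ.erase j).erase i = (Finset.univ.erase i).erase j := by
  ext k
  simp only [Finset.mem_erase]
  tauto

/-- If w_i ≥ w_j > 0 then χ_i ≥ χ_j. -/
theorem chiLin_monotone_pos_weights
    {n : ℕ} (hn : 1 ≤ n) (w : Fin n → ℝ) (q : ℝ) (hw : ∀ k, w k ≠ 0)
    (i j : Fin n) (hij : w j ≤ w i) (hj : 0 < w j) :
    chiLin w q j ≤ chiLin w q i := by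
  obtain ⟨m, rfl⟩ : ∃ m, n = m + 1 := ⟨n - 1, by omega⟩
  by_cases heq : j = i
  · rw [heq]
  · have hi : 0 < w i := lt_of_lt_of_le hj hij
    rw [chi_formula w q i j heq hi, chi_formula w q j i (fun h => heq h.symm) hj,
      erase_comm' i j]
    have hsum : Continuous fun x : Fin (m+1) → ℝ =>
        q - ∑ k ∈ (Finset.univ.erase i).erase j, w k * x k :=
      continuous_const.sub (continuous_finset_sum _ fun k _ =>
        continuous_const.mul (continuous_apply k))
    have hcompact : IsCompact (unitCube (m+1)) := isCompact_univ_pi fun _ => isCompact_Icc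
    have hint1 : IntegrableOn (fun x : Fin (m+1) → ℝ =>
        Theta (w j) (w i) (q - ∑ k ∈ (Finset.univ.erase i).erase j, w k * x k))
        (unitCube (m+1)) volume :=
      (((theta_continuous hj hi).comp hsum).continuousOn).integrableOn_compact'
        hcompact (unitCube_measurable _)
    have hint2 : IntegrableOn (fun x : Fin (m+1) → ℝ =>
        Theta (w i) (w j) (q - ∑ k ∈ (Finset.univ.erase i).erase j, w k * x k))
        (unitCube (m+1)) volume :=
      (((theta_continuous hi hj).comp hsum).continuousOn).integrableOn_compact'
        hcompact (unitCube_measurable _)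
    exact setIntegral_mono_on hint1 hint2 (unitCube_measurable _)
      fun x _ => theta_core hj hij _
end
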